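/- SOS relaxation sufficiency for continuous invariants: Let f be a polynomial vector field on ℝⁿ whose solutions exist and are unique on [0, ∞), and let p, h ∈ ℝ[x1, …, xn]. Suppose there exist sum-of-squares polynomials s1, s2 ∈ ℝ[x1, …, xn] and a real constant ε > 0 such that L¹_f p = s1 + s2·h + ε as polynomials. Then L¹_f p(x) > 0 for all x with h(x) > 0, and consequently P = {x ∈ ℝⁿ : p(x) ≥ 0} is a continuous invariant of (D, f) with D = {x ∈ ℝⁿ : h(x) > 0}. -/

import Mathlib

open MvPolynomial Set

/-- Lie derivatives of a polynomial `p` along the polynomial vector field `f`. -/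
noncomputable def lieDeriv {n : ℕ} (f : Fin n → MvPolynomial (Fin n) ℝ)
    (p : MvPolynomial (Fin n) ℝ) : ℕ → MvPolynomial (Fin n) ℝ
  | 0 => p
  | k + 1 => ∑ i, (pderiv i (lieDeriv f p k)) * f i

/-- Evaluation of a polynomial vector field at a point of ℝⁿ. -/
noncomputable def evalVF {n : ℕ} (f : Fin n → MvPolynomial (Fin n) ℝ)
    (x : Fin n → ℝ) : Fin n → ℝ := fun i => eval x (f i)

/-- `x : ℝ → ℝⁿ` is a solution of `ẋ = F(x)` on `[0, ∞)`. -/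
def IsSolutionOn {n : ℕ} (F : (Fin n → ℝ) → (Fin n → ℝ)) (x : ℝ → (Fin n → ℝ)) : Prop :=
  ∀ t ∈ Ici (0:ℝ), HasDerivWithinAt x (F (x t)) (Ici 0) t

/-- Solutions of `ẋ = F(x)` exist and are unique on `[0, ∞)` for every initial condition. -/
def CompleteFlow {n : ℕ} (F : (Fin n → ℝ) → (Fin n → ℝ)) : Prop :=
  (∀ x0 : Fin n → ℝ, ∃ x : ℝ → (Fin n → ℝ), x 0 = x0 ∧ IsSolutionOn F x) ∧
  (∀ x y : ℝ → (Fin n → ℝ), IsSolutionOn F x → IsSolutionOn F y → x 0 = y 0 →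
    ∀ t ∈ Ici (0:ℝ), x t = y t)

/-- `P` is a continuous invariant of `(D, F)`. -/
def IsCI {n : ℕ} (D P : Set (Fin n → ℝ)) (F : (Fin n → ℝ) → (Fin n → ℝ)) : Prop :=
  ∀ x : ℝ → (Fin n → ℝ), IsSolutionOn F x → x 0 ∈ P ∩ D →
    ∀ T ≥ (0:ℝ), (∀ t ∈ Icc (0:ℝ) T, x t ∈ D) → ∀ t ∈ Icc (0:ℝ) T, x t ∈ P

/-- `s` is a sum of squares of polynomials. -/
def IsSOS {n : ℕ} (s : MvPolynomial (Fin n) ℝ) : Prop :=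
  ∃ (m : ℕ) (q : Fin m → MvPolynomial (Fin n) ℝ), s = ∑ i, (q i) ^ 2

lemma sos_eval_nonneg {n : ℕ} {s : MvPolynomial (Fin n) ℝ} (hs : IsSOS s) (x : Fin n → ℝ) :
    0 ≤ eval x s := by
  obtain ⟨m, q, rfl⟩ := hs
  simp only [map_sum, map_pow]
  exact Finset.sum_nonneg fun i _ => sq_nonneg _

lemma hasDerivWithinAt_eval_comp {n : ℕ} (p : MvPolynomial (Fin n) ℝ)
    {x : ℝ → Fin n → ℝ} {v : Fin n → ℝ} {s : Set ℝ} {t : ℝ}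
    (hx : ∀ i, HasDerivWithinAt (fun τ => x τ i) (v i) s t) :
    HasDerivWithinAt (fun τ => eval (x τ) p) (∑ i, eval (x t) (pderiv i p) * v i) s t := by
  induction p using MvPolynomial.induction_on with
  | C a =>
      simpa using (hasDerivWithinAt_const t s a)
  | add q r hq hr =>
      simpa [Finset.sum_add_distrib, add_mul] using hq.fun_add hr
  | mul_X q i hq =>
      have hprod := hq.fun_mul (hx i)
      have harr : (fun τ => eval (x τ) (q * X i)) = fun τ => eval (x τ) q * x τ i := by
        funext τ; simp
      rw [harr]
      refine hprod.congr_deriv ?_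
      have : ∀ j, eval (x t) (pderiv j (q * X i)) * v j
          = eval (x t) (pderiv j q) * v j * x t i
            + (if j = i then eval (x t) q * v i else 0) := by
        intro j
        rcases eq_or_ne j i with rfl | hne
        · simp [pderiv_mul, pderiv_X_self]; ring
        · simp [pderiv_mul, pderiv_X_of_ne hne, Pi.single_eq_of_ne hne.symm, hne]; ring
      simp only [this, Finset.sum_add_distrib, Finset.sum_ite_eq', Finset.mem_univ, if_true,
        ← Finset.sum_mul]

theorem sos_relaxation_ci {n : ℕ} (f : Fin n → MvPolynomial (Fin n) ℝ)
    (p h s1 s2 : MvPolynomial (Fin n) ℝ) (ε : ℝ)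
    (hflow : CompleteFlow (evalVF f))
    (hs1 : IsSOS s1) (hs2 : IsSOS s2) (hε : 0 < ε)
    (heq : lieDeriv f p 1 = s1 + s2 * h + C ε) :
    (∀ x : Fin n → ℝ, 0 < eval x h → 0 < eval x (lieDeriv f p 1)) ∧
    IsCI {x | 0 < eval x h} {x | 0 ≤ eval x p} (evalVF f) := by
  have key : ∀ x : Fin n → ℝ, 0 < eval x h → 0 < eval x (lieDeriv f p 1) := by
    intro x hx
    have e : eval x (lieDeriv f p 1) = eval x s1 + eval x s2 * eval x h + ε := by
      rw [heq]; simp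
    have h1 := sos_eval_nonneg hs1 x
    have h2 := sos_eval_nonneg hs2 x
    rw [e]; nlinarith
  refine ⟨key, ?_⟩
  intro x hsol hx0 T hT hD t ht
  have hderiv : ∀ τ ∈ Icc (0:ℝ) T,
      HasDerivWithinAt (fun σ => eval (x σ) p) (eval (x τ) (lieDeriv f p 1)) (Ici 0) τ := by
    intro τ hτ
    have hxd : ∀ i, HasDerivWithinAt (fun σ => x σ i) (evalVF f (x τ) i) (Ici 0) τ :=
      fun i => hasDerivWithinAt_pi.1 (hsol τ hτ.1) i
    have := hasDerivWithinAt_eval_comp p hxd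
    have e1 : eval (x τ) (lieDeriv f p 1) = ∑ i, eval (x τ) (pderiv i p) * evalVF f (x τ) i := by
      simp [lieDeriv, evalVF]
    rw [e1]; exact this
  rcases eq_or_lt_of_le ht.1 with rfl | htpos
  · exact hx0.1
  · have hTpos : 0 < T := lt_of_lt_of_le htpos ht.2
    have hcont : ContinuousOn (fun σ => eval (x σ) p) (Icc 0 T) := fun τ hτ =>
      ((hderiv τ hτ).continuousWithinAt).mono (fun y hy => hy.1)
    have hmono : StrictMonoOn (fun σ => eval (x σ) p) (Icc 0 T) := by
      apply strictMonoOn_of_deriv_pos (convex_Icc 0 T) hcont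
      intro τ hτ
      rw [interior_Icc] at hτ
      have hτIcc : τ ∈ Icc (0:ℝ) T := ⟨le_of_lt hτ.1, le_of_lt hτ.2⟩
      have hda : HasDerivAt (fun σ => eval (x σ) p) (eval (x τ) (lieDeriv f p 1)) τ :=
        (hderiv τ hτIcc).hasDerivAt (Ici_mem_nhds hτ.1)
      rw [hda.deriv]
      exact key _ (hD τ hτIcc)
    have : eval (x 0) p < eval (x t) p :=
      hmono ⟨le_refl 0, le_of_lt hTpos⟩ ht htpos
    exact le_of_lt (lt_of_le_of_lt hx0.1 this)
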